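/- If ∇f is L-Lipschitz and the fixed step size satisfies η ≤ 1/L, then along gradient descent the sum of squared gradient norms is bounded: ∑_{i=0}^{k-1} ‖∇f(x_i)‖² ≤ (2/η)(f(x_0) - f(x_k)), and in particular if f is bounded below by f*, then ∑_{i=0}^{∞} ‖∇f(x_i)‖² ≤ (2/η)(f(x_0) - f*). -/

import Mathlib

open InnerProductSpace

lemma descent_lemma {n : ℕ} (f : EuclideanSpace ℝ (Fin n) → ℝ) (L : ℝ)
    (hf : Differentiable ℝ f)
    (hlip : ∀ a b, ‖gradient f b - gradient f a‖ ≤ L * ‖b - a‖)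
    (x v : EuclideanSpace ℝ (Fin n)) :
    f (x + v) ≤ f x + inner ℝ (gradient f x) v + L / 2 * ‖v‖ ^ 2 := by
  set h : ℝ → ℝ := fun t => f (x + t • v) - t * inner ℝ (gradient f x) v - L / 2 * t ^ 2 * ‖v‖ ^ 2
    with hh
  have hderiv : ∀ t : ℝ, HasDerivAt h
      (inner ℝ (gradient f (x + t • v)) v - inner ℝ (gradient f x) v - L / 2 * (2 * t) * ‖v‖ ^ 2) t := by
    intro t
    have hc : HasDerivAt (fun t : ℝ => x + t • v) v t := by
      simpa using ((hasDerivAt_id t).smul_const v).const_add x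
    have h1 : HasDerivAt (fun t : ℝ => f (x + t • v)) (inner ℝ (gradient f (x + t • v)) v) t := by
      have := ((hf (x + t • v)).hasGradientAt.hasFDerivAt).comp_hasDerivAt t hc
      rw [InnerProductSpace.toDual_apply_apply] at this
      exact this
    have h2 : HasDerivAt (fun t : ℝ => t * inner ℝ (gradient f x) v)
        ((inner ℝ (gradient f x) v : ℝ)) t := by
      simpa using (hasDerivAt_id t).mul_const (inner ℝ (gradient f x) v : ℝ)
    have h3 : HasDerivAt (fun t : ℝ => L / 2 * t ^ 2 * ‖v‖ ^ 2)
        (L / 2 * (2 * t) * ‖v‖ ^ 2) t := by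
      have := ((hasDerivAt_pow 2 t).const_mul (L / 2)).mul_const (‖v‖ ^ 2)
      simpa [mul_comm, mul_assoc, mul_left_comm] using this
    exact (h1.sub h2).sub h3
  have hanti : AntitoneOn h (Set.Icc (0:ℝ) 1) := by
    apply antitoneOn_of_deriv_nonpos (convex_Icc 0 1)
    · exact Continuous.continuousOn (by
        exact continuous_iff_continuousAt.2 fun t => (hderiv t).continuousAt)
    · intro t _
      exact ((hderiv t).differentiableAt).differentiableWithinAt
    · intro t ht
      rw [interior_Icc] at ht
      rw [(hderiv t).deriv]
      have key : (inner ℝ (gradient f (x + t • v)) v : ℝ) - inner ℝ (gradient f x) v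
          ≤ L * t * ‖v‖ ^ 2 := by
        rw [← inner_sub_left]
        calc (inner ℝ (gradient f (x + t • v) - gradient f x) v : ℝ)
            ≤ ‖gradient f (x + t • v) - gradient f x‖ * ‖v‖ := real_inner_le_norm _ _
          _ ≤ (L * ‖(x + t • v) - x‖) * ‖v‖ := by
              gcongr; exact hlip x (x + t • v)
          _ = L * t * ‖v‖ ^ 2 := by
              rw [add_sub_cancel_left, norm_smul]
              simp [Real.norm_eq_abs, abs_of_pos ht.1, pow_two]; ring
      nlinarith [key]
  have := hanti (Set.left_mem_Icc.2 zero_le_one) (Set.right_mem_Icc.2 zero_le_one) zero_le_one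
  simp only [hh, one_smul, zero_smul, add_zero, one_pow, zero_pow, one_mul, zero_mul] at this
  linarith

theorem sum_sq_grad_norm_bounded (n : ℕ) (f : EuclideanSpace ℝ (Fin n) → ℝ) (L η : ℝ)
    (x : ℕ → EuclideanSpace ℝ (Fin n))
    (hf : Differentiable ℝ f) (hL : 0 < L)
    (hlip : ∀ a b, ‖gradient f b - gradient f a‖ ≤ L * ‖b - a‖)
    (hη : 0 < η) (hηL : η ≤ 1 / L)
    (hstep : ∀ i, x (i + 1) = x i - η • gradient f (x i)) :
    (∀ k, ∑ i ∈ Finset.range k, ‖gradient f (x i)‖ ^ 2 ≤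
      (2 / η) * (f (x 0) - f (x k))) ∧
    ∀ fstar : ℝ, (∀ y, fstar ≤ f y) →
      ∑' i : ℕ, ‖gradient f (x i)‖ ^ 2 ≤ (2 / η) * (f (x 0) - fstar) := by
  have hLη : L * η ≤ 1 := by
    rw [div_eq_mul_inv, one_mul] at hηL
    calc L * η ≤ L * L⁻¹ := by gcongr
      _ = 1 := mul_inv_cancel₀ hL.ne'
  have hstep' : ∀ i, η / 2 * ‖gradient f (x i)‖ ^ 2 ≤ f (x i) - f (x (i + 1)) := by
    intro i
    set g := gradient f (x i) with hg
    have h1 := descent_lemma f L hf hlip (x i) (-(η • g))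
    have h2 : x i + -(η • g) = x (i + 1) := by rw [hstep i]; abel
    rw [h2] at h1
    have h3 : (inner ℝ g (-(η • g)) : ℝ) = -(η * ‖g‖ ^ 2) := by
      rw [inner_neg_right, real_inner_smul_right, real_inner_self_eq_norm_sq]
    have h4 : ‖-(η • g)‖ ^ 2 = η ^ 2 * ‖g‖ ^ 2 := by
      rw [norm_neg, norm_smul, mul_pow, Real.norm_eq_abs, sq_abs]
    rw [h3, h4] at h1
    nlinarith [sq_nonneg ‖g‖, mul_nonneg (mul_nonneg hη.le hη.le) (sq_nonneg ‖g‖)]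
  have hsum : ∀ k, ∑ i ∈ Finset.range k, ‖gradient f (x i)‖ ^ 2 ≤
      (2 / η) * (f (x 0) - f (x k)) := by
    intro k
    have h1 : η / 2 * ∑ i ∈ Finset.range k, ‖gradient f (x i)‖ ^ 2 ≤ f (x 0) - f (x k) := by
      rw [Finset.mul_sum, ← Finset.sum_range_sub' (fun i => f (x i)) k]
      exact Finset.sum_le_sum fun i _ => hstep' i
    rw [div_mul_eq_mul_div, le_div_iff₀ hη]
    nlinarith
  refine ⟨hsum, fun fstar hfstar => ?_⟩
  apply Real.tsum_le_of_sum_range_le (fun i => sq_nonneg _)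
  intro k
  refine (hsum k).trans ?_
  have : f (x 0) - f (x k) ≤ f (x 0) - fstar := by linarith [hfstar (x k)]
  gcongr
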